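/- Define 𝒴(φ) = (φ(φ−2) + √2(φ−1) + 1)/(√2·φ) for φ > 0. Then 𝒴 satisfies the stationary equation 𝒴·𝒴'' + (2 − φ − 𝒴')·𝒴' + 𝒴·(1 − 𝒴/φ²) = 0 for all φ > 0. -/

import Mathlib

/-- The FIK soliton profile in the variables y(φ) = φ_ρ. -/
noncomputable def Yfik (x : ℝ) : ℝ :=
  (x * (x - 2) + Real.sqrt 2 * (x - 1) + 1) / (Real.sqrt 2 * x)

noncomputable def Y1 (x : ℝ) : ℝ := 1 / Real.sqrt 2 + (Real.sqrt 2 - 1) / (Real.sqrt 2 * x ^ 2)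

lemma hs2 : Real.sqrt 2 ^ 2 = 2 := Real.sq_sqrt (by norm_num)

lemma hs0 : Real.sqrt 2 ≠ 0 := by positivity

lemma hasDerivAt_Yfik (x : ℝ) (hx : x ≠ 0) : HasDerivAt Yfik (Y1 x) x := by
  have h1 : HasDerivAt (fun x : ℝ => x * (x - 2) + Real.sqrt 2 * (x - 1) + 1)
      (1 * (x - 2) + x * 1 + (0 * (x - 1) + Real.sqrt 2 * 1)) x := by
    simpa using (((hasDerivAt_id x).mul ((hasDerivAt_id x).sub_const 2)).add
      ((hasDerivAt_const x (Real.sqrt 2)).mul ((hasDerivAt_id x).sub_const 1))).add_const 1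
  have h2 : HasDerivAt (fun x : ℝ => Real.sqrt 2 * x) (Real.sqrt 2) x := by
    simpa using (hasDerivAt_id x).const_mul (Real.sqrt 2)
  have hg : Real.sqrt 2 * x ≠ 0 := mul_ne_zero hs0 hx
  have := h1.div h2 hg
  refine this.congr_deriv ?_
  have h2' := hs2
  unfold Y1
  field_simp [Y1]
  have h4 : Real.sqrt 2 ^ 4 = 4 := by nlinarith [h2']
  have h6 : Real.sqrt 2 ^ 6 = 8 := by nlinarith [h2']
  ring_nf
  try simp only [h2', h4, h6]
  try ring

lemma hasDerivAt_Y1 (x : ℝ) (hx : x ≠ 0) :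
    HasDerivAt Y1 (-(2 * (Real.sqrt 2 - 1)) / (Real.sqrt 2 * x ^ 3)) x := by
  have h2 : HasDerivAt (fun x : ℝ => Real.sqrt 2 * x ^ 2) (Real.sqrt 2 * (2 * x)) x := by
    simpa using ((hasDerivAt_pow 2 x).const_mul (Real.sqrt 2))
  have hg : Real.sqrt 2 * x ^ 2 ≠ 0 := mul_ne_zero hs0 (pow_ne_zero _ hx)
  have h1 : HasDerivAt (fun _ : ℝ => Real.sqrt 2 - 1) 0 x := hasDerivAt_const _ _
  have := ((h1.div h2 hg).const_add (1 / Real.sqrt 2))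
  refine this.congr_deriv ?_
  field_simp
  ring

lemma deriv_Yfik (x : ℝ) (hx : x ≠ 0) : deriv Yfik x = Y1 x :=
  (hasDerivAt_Yfik x hx).deriv

theorem stmt3 : ∀ x : ℝ, 0 < x →
    Yfik x * deriv (deriv Yfik) x + (2 - x - deriv Yfik x) * deriv Yfik x
      + Yfik x * (1 - Yfik x / x ^ 2) = 0 := by
  intro x hx
  have hx0 : x ≠ 0 := ne_of_gt hx
  have hev : deriv Yfik =ᶠ[nhds x] Y1 := by
    filter_upwards [eventually_ne_nhds hx0] with y hy using deriv_Yfik y hy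
  have hdd : deriv (deriv Yfik) x = -(2 * (Real.sqrt 2 - 1)) / (Real.sqrt 2 * x ^ 3) := by
    rw [hev.deriv_eq]
    exact (hasDerivAt_Y1 x hx0).deriv
  rw [hdd, deriv_Yfik x hx0]
  have h2 := hs2
  unfold Yfik Y1
  field_simp
  have h4 : Real.sqrt 2 ^ 4 = 4 := by nlinarith [h2]
  have h6 : Real.sqrt 2 ^ 6 = 8 := by nlinarith [h2]
  ring_nf
  simp only [h2, h4, h6]
  ring
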